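/- arXiv:1301.0034 — 3 statements merged into one kernel-verified Lean document; each statement's English description precedes it below -/
import Mathlib

section
/- Suppose λ = 1 is the only eigenvalue of D with |λ| = 1. Then 1 is an eigenvalue of L and every eigenvalue λ of L with |λ| = 1 satisfies λ = 1. Moreover, if the algebraic multiplicity of 1 as an eigenvalue of D equals 1, then the algebraic multiplicity of 1 as an eigenvalue of L also equals 1. -/
open Matrix

noncomputable def eqE (n : ℕ) :
    Matrix (Fin n) (Fin n) ℂ ≃ₗ[ℂ] EuclideanSpace ℂ (Fin n × Fin n) :=
  (LinearEquiv.curry ℂ ℂ (Fin n) (Fin n)).symm.trans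
    (WithLp.linearEquiv 2 ℂ (Fin n × Fin n → ℂ)).symm

lemma inner_eqE {n : ℕ} (X Y : Matrix (Fin n) (Fin n) ℂ) :
    (inner ℂ (eqE n X) (eqE n Y) : ℂ) = (Xᴴ * Y).trace := by
  simp only [PiLp.inner_apply, RCLike.inner_apply, Matrix.trace, Matrix.diag,
    Matrix.mul_apply, conjTranspose_apply, Fintype.sum_prod_type]
  rw [Finset.sum_comm]
  exact Finset.sum_congr rfl fun _ _ => Finset.sum_congr rfl fun _ _ => by rw [mul_comm]; rfl

lemma norm_eqE_sq {n : ℕ} (X : Matrix (Fin n) (Fin n) ℂ) :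
    ‖eqE n X‖ ^ 2 = ((Xᴴ * X).trace).re := by
  rw [← inner_eqE, ← inner_self_eq_norm_sq (𝕜 := ℂ)]
  rfl

lemma norm_eqE_eq_of_trace {n : ℕ} {X Y : Matrix (Fin n) (Fin n) ℂ}
    (h : (Xᴴ * X).trace = (Yᴴ * Y).trace) : ‖eqE n X‖ = ‖eqE n Y‖ := by
  have h2 : ‖eqE n X‖ ^ 2 = ‖eqE n Y‖ ^ 2 := by rw [norm_eqE_sq, norm_eqE_sq, h]
  have := congrArg Real.sqrt h2
  rwa [Real.sqrt_sq (norm_nonneg _), Real.sqrt_sq (norm_nonneg _)] at this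

lemma norm_eqE_le_of_trace {n : ℕ} {X Y : Matrix (Fin n) (Fin n) ℂ}
    (h : ((Xᴴ * X).trace).re ≤ ((Yᴴ * Y).trace).re) : ‖eqE n X‖ ≤ ‖eqE n Y‖ := by
  have h2 : ‖eqE n X‖ ^ 2 ≤ ‖eqE n Y‖ ^ 2 := by rw [norm_eqE_sq, norm_eqE_sq]; exact h
  nlinarith [norm_nonneg (eqE n X), norm_nonneg (eqE n Y)]

lemma norm_eqE_unitary {n : ℕ} {U : Matrix (Fin n) (Fin n) ℂ}
    (hU : U ∈ Matrix.unitaryGroup (Fin n) ℂ) (X : Matrix (Fin n) (Fin n) ℂ) :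
    ‖eqE n (U * X * Uᴴ)‖ = ‖eqE n X‖ := by
  apply norm_eqE_eq_of_trace
  have h1 : Uᴴ * U = 1 := by
    have := hU.1
    rwa [Matrix.star_eq_conjTranspose] at this
  calc ((U * X * Uᴴ)ᴴ * (U * X * Uᴴ)).trace
      = (U * (Xᴴ * X) * Uᴴ).trace := by
        have hUU : ∀ W : Matrix (Fin n) (Fin n) ℂ, Uᴴ * (U * W) = W := fun W => by
          rw [← Matrix.mul_assoc, h1, Matrix.one_mul]
        simp only [conjTranspose_mul, conjTranspose_conjTranspose, Matrix.mul_assoc, hUU]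
    _ = (Xᴴ * X).trace := by
        rw [Matrix.trace_mul_cycle, ← Matrix.mul_assoc, h1, Matrix.one_mul]

lemma kraus_trace_sum1 {n m : ℕ} (A : Fin m → Matrix (Fin n) (Fin n) ℂ)
    (hA1 : ∑ j, (A j)ᴴ * A j = 1) (hA2 : ∑ j, A j * (A j)ᴴ = 1) :
    ∑ j, ∑ k, ((A j)ᴴ * A k) * ((A j)ᴴ * A k)ᴴ = 1 := by
  simp only [conjTranspose_mul, conjTranspose_conjTranspose]
  calc ∑ j, ∑ k, (A j)ᴴ * A k * ((A k)ᴴ * A j)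
      = ∑ j, (A j)ᴴ * ((∑ k, A k * (A k)ᴴ) * A j) := by
        simp [Finset.mul_sum, Finset.sum_mul, Matrix.mul_assoc]
    _ = 1 := by rw [hA2]; simpa using hA1

lemma kraus_trace_sum2 {n m : ℕ} (A : Fin m → Matrix (Fin n) (Fin n) ℂ)
    (hA1 : ∑ j, (A j)ᴴ * A j = 1) (hA2 : ∑ j, A j * (A j)ᴴ = 1) :
    ∑ j, ∑ k, ((A j)ᴴ * A k)ᴴ * ((A j)ᴴ * A k) = 1 := by
  simp only [conjTranspose_mul, conjTranspose_conjTranspose]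
  rw [Finset.sum_comm]
  calc ∑ k, ∑ j, (A k)ᴴ * A j * ((A j)ᴴ * A k)
      = ∑ k, (A k)ᴴ * ((∑ j, A j * (A j)ᴴ) * A k) := by
        simp [Finset.mul_sum, Finset.sum_mul, Matrix.mul_assoc]
    _ = 1 := by rw [hA2]; simpa using hA1

lemma norm_eqE_kraus {n m : ℕ} (A : Fin m → Matrix (Fin n) (Fin n) ℂ)
    (hA1 : ∑ j, (A j)ᴴ * A j = 1) (hA2 : ∑ j, A j * (A j)ᴴ = 1)
    (X : Matrix (Fin n) (Fin n) ℂ) :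
    ‖eqE n (∑ j, A j * X * (A j)ᴴ)‖ ≤ ‖eqE n X‖ := by
  set e := eqE n with he
  set B : Fin m → Fin m → Matrix (Fin n) (Fin n) ℂ := fun j k => (A j)ᴴ * A k with hB
  -- term identity
  have hterm : ∀ j k, (inner ℂ (e (A j * X * (A j)ᴴ)) (e (A k * X * (A k)ᴴ)) : ℂ)
      = inner ℂ (e ((B j k)ᴴ * X)) (e (X * (B j k)ᴴ)) := by
    intro j k
    rw [he, inner_eqE, inner_eqE]
    simp only [hB, conjTranspose_mul, conjTranspose_conjTranspose, Matrix.mul_assoc]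
    rw [Matrix.trace_mul_comm]
    simp only [Matrix.mul_assoc]
  -- per-term bound
  have hbound : ∀ j k, (inner ℂ (e (A j * X * (A j)ᴴ)) (e (A k * X * (A k)ᴴ)) : ℂ).re
      ≤ (‖e ((B j k)ᴴ * X)‖ ^ 2 + ‖e (X * (B j k)ᴴ)‖ ^ 2) / 2 := by
    intro j k
    rw [hterm j k]
    have h1 : (inner ℂ (e ((B j k)ᴴ * X)) (e (X * (B j k)ᴴ)) : ℂ).re
        ≤ ‖(inner ℂ (e ((B j k)ᴴ * X)) (e (X * (B j k)ᴴ)) : ℂ)‖ := by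
      exact Complex.re_le_norm _
    have h2 := norm_inner_le_norm (𝕜 := ℂ) (e ((B j k)ᴴ * X)) (e (X * (B j k)ᴴ))
    nlinarith [sq_nonneg (‖e ((B j k)ᴴ * X)‖ - ‖e (X * (B j k)ᴴ)‖)]
  -- sum of first squares
  have hsum1 : ∑ j, ∑ k, ‖e ((B j k)ᴴ * X)‖ ^ 2 = ‖e X‖ ^ 2 := by
    have htr : ∑ j, ∑ k, (((B j k)ᴴ * X)ᴴ * ((B j k)ᴴ * X)).trace = (Xᴴ * X).trace := by
      have hc : ∀ j k, (((B j k)ᴴ * X)ᴴ * ((B j k)ᴴ * X)).trace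
          = ((X * Xᴴ) * (B j k * (B j k)ᴴ)).trace := by
        intro j k
        simp only [conjTranspose_mul, conjTranspose_conjTranspose, Matrix.mul_assoc]
        rw [Matrix.trace_mul_comm]
        simp only [Matrix.mul_assoc]
        rw [Matrix.trace_mul_comm]
        simp only [Matrix.mul_assoc]
        rw [Matrix.trace_mul_comm]
        simp only [Matrix.mul_assoc]
      simp only [hc, ← Matrix.trace_sum, ← Finset.mul_sum]
      rw [kraus_trace_sum1 A hA1 hA2, Matrix.mul_one, Matrix.trace_mul_comm]
    calc ∑ j, ∑ k, ‖e ((B j k)ᴴ * X)‖ ^ 2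
        = ∑ j, ∑ k, ((((B j k)ᴴ * X)ᴴ * ((B j k)ᴴ * X)).trace).re := by
          simp only [he, norm_eqE_sq]
      _ = ((Xᴴ * X).trace).re := by rw [← htr]; simp [Complex.re_sum]
      _ = ‖e X‖ ^ 2 := (norm_eqE_sq X).symm
  have hsum2 : ∑ j, ∑ k, ‖e (X * (B j k)ᴴ)‖ ^ 2 = ‖e X‖ ^ 2 := by
    have htr : ∑ j, ∑ k, ((X * (B j k)ᴴ)ᴴ * (X * (B j k)ᴴ)).trace = (Xᴴ * X).trace := by
      have hc : ∀ j k, ((X * (B j k)ᴴ)ᴴ * (X * (B j k)ᴴ)).trace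
          = ((Xᴴ * X) * ((B j k)ᴴ * B j k)).trace := by
        intro j k
        simp only [conjTranspose_mul, conjTranspose_conjTranspose, Matrix.mul_assoc]
        rw [Matrix.trace_mul_comm]
        simp only [Matrix.mul_assoc]
      have hBB : ∑ j, ∑ k, (B j k)ᴴ * B j k = 1 := kraus_trace_sum2 A hA1 hA2
      simp only [hc, ← Matrix.trace_sum, ← Finset.mul_sum]
      rw [hBB, Matrix.mul_one]
    calc ∑ j, ∑ k, ‖e (X * (B j k)ᴴ)‖ ^ 2
        = ∑ j, ∑ k, (((X * (B j k)ᴴ)ᴴ * (X * (B j k)ᴴ)).trace).re := by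
          simp only [he, norm_eqE_sq]
      _ = ((Xᴴ * X).trace).re := by rw [← htr]; simp [Complex.re_sum]
      _ = ‖e X‖ ^ 2 := (norm_eqE_sq X).symm
  -- expand the norm of the sum
  have hexp : ‖e (∑ j, A j * X * (A j)ᴴ)‖ ^ 2
      = (∑ j, ∑ k, (inner ℂ (e (A j * X * (A j)ᴴ)) (e (A k * X * (A k)ᴴ)) : ℂ)).re := by
    have hin : (inner ℂ (e (∑ j, A j * X * (A j)ᴴ)) (e (∑ j, A j * X * (A j)ᴴ)) : ℂ)
        = ∑ j, ∑ k, inner ℂ (e (A j * X * (A j)ᴴ)) (e (A k * X * (A k)ᴴ)) := by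
      simp only [map_sum, sum_inner, inner_sum]
      exact Finset.sum_comm ..
    rw [← inner_self_eq_norm_sq (𝕜 := ℂ), hin]
    rfl
  have hle : ‖e (∑ j, A j * X * (A j)ᴴ)‖ ^ 2 ≤ ‖e X‖ ^ 2 := by
    rw [hexp, Complex.re_sum]
    calc (∑ j, (∑ k, (inner ℂ (e (A j * X * (A j)ᴴ)) (e (A k * X * (A k)ᴴ)) : ℂ)).re)
        ≤ ∑ j, ∑ k, (‖e ((B j k)ᴴ * X)‖ ^ 2 + ‖e (X * (B j k)ᴴ)‖ ^ 2) / 2 := by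
          refine Finset.sum_le_sum ?_
          intro j hj
          rw [Complex.re_sum]
          exact Finset.sum_le_sum fun k _ => hbound j k
      _ = ∑ j, ((∑ k, ‖e ((B j k)ᴴ * X)‖ ^ 2) + (∑ k, ‖e (X * (B j k)ᴴ)‖ ^ 2)) / 2 :=
          Finset.sum_congr rfl fun j _ => by
            rw [← Finset.sum_div, Finset.sum_add_distrib]
      _ = ((∑ j, ∑ k, ‖e ((B j k)ᴴ * X)‖ ^ 2) + (∑ j, ∑ k, ‖e (X * (B j k)ᴴ)‖ ^ 2)) / 2 := by
            rw [← Finset.sum_div, Finset.sum_add_distrib]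
      _ = ‖e X‖ ^ 2 := by rw [hsum1, hsum2]; ring
  nlinarith [norm_nonneg (e (∑ j, A j * X * (A j)ᴴ)), norm_nonneg (e X)]


/-- The algebraic multiplicity of `μ` as an eigenvalue of `T`: the dimension of the
generalized eigenspace `⋃_{m ≥ 1} ker ((T - μ·id)^m)`. -/
noncomputable def algMult {H : Type*} [AddCommGroup H] [Module ℂ H]
    (T : Module.End ℂ H) (μ : ℂ) : ℕ :=
  Module.finrank ℂ
    (⨆ m : ℕ, LinearMap.ker ((T - μ • (1 : Module.End ℂ H)) ^ m) : Submodule ℂ H)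

set_option maxHeartbeats 1600000 in
/-- Let `U` be unitary, `A₁, …, A_m` Kraus operators with
`∑ Aⱼ* Aⱼ = I = ∑ Aⱼ Aⱼ*`, `C(ρ) = U ρ U*`, `D(ρ) = ∑ Aⱼ ρ Aⱼ*`, and `L = qC + pD` with
`0 < p < 1`, `q = 1 - p`, all acting on `n×n` complex matrices.  If `λ = 1` is the only
eigenvalue of `D` with `|λ| = 1`, then `1` is an eigenvalue of `L` and every eigenvalue `λ`
of `L` with `|λ| = 1` satisfies `λ = 1`; moreover, if the algebraic multiplicity of `1` as an
eigenvalue of `D` is `1`, then the algebraic multiplicity of `1` as an eigenvalue of `L` is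
also `1`. -/
theorem stmt5 {n m : ℕ} (hn : 1 ≤ n)
    (U : Matrix (Fin n) (Fin n) ℂ) (hU : U ∈ Matrix.unitaryGroup (Fin n) ℂ)
    (A : Fin m → Matrix (Fin n) (Fin n) ℂ)
    (hA1 : ∑ j, (A j)ᴴ * A j = 1) (hA2 : ∑ j, A j * (A j)ᴴ = 1)
    (p q : ℝ) (hp : 0 < p) (hp1 : p < 1) (hq : q = 1 - p)
    (C D L : Module.End ℂ (Matrix (Fin n) (Fin n) ℂ))
    (hC : ∀ ρ, C ρ = U * ρ * Uᴴ)
    (hD : ∀ ρ, D ρ = ∑ j, A j * ρ * (A j)ᴴ)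
    (hL : L = (q : ℂ) • C + (p : ℂ) • D)
    (hDeig : ∃ ρ, ρ ≠ 0 ∧ D ρ = ρ)
    (hDonly : ∀ (lam : ℂ) (ρ : Matrix (Fin n) (Fin n) ℂ),
      ρ ≠ 0 → D ρ = lam • ρ → ‖lam‖ = 1 → lam = 1) :
    ((∃ ρ, ρ ≠ 0 ∧ L ρ = ρ) ∧
      ∀ (lam : ℂ) (ρ : Matrix (Fin n) (Fin n) ℂ),
        ρ ≠ 0 → L ρ = lam • ρ → ‖lam‖ = 1 → lam = 1) ∧
    (algMult D 1 = 1 → algMult L 1 = 1) := by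
  have hq0 : 0 < q := by rw [hq]; linarith
  have hqp : (q : ℂ) + (p : ℂ) = 1 := by
    rw [hq]; push_cast; ring
  have hone : (1 : Matrix (Fin n) (Fin n) ℂ) ≠ 0 := by
    intro h
    have := congrFun (congrFun h ⟨0, hn⟩) ⟨0, hn⟩
    simp [Matrix.one_apply] at this
  -- L applied
  have hLapp : ∀ ρ, L ρ = (q : ℂ) • C ρ + (p : ℂ) • D ρ := by
    intro ρ; rw [hL]; rfl
  have hC1 : C 1 = 1 := by
    rw [hC, Matrix.mul_one]
    have := hU.1
    rw [Matrix.star_eq_conjTranspose] at this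
    rw [mul_eq_one_comm] at this
    exact this
  have hD1 : D 1 = 1 := by rw [hD]; simpa using hA2
  have hL1 : L 1 = 1 := by
    rw [hLapp, hC1, hD1, ← add_smul, hqp, one_smul]
  -- norm facts
  have hCnorm : ∀ ρ, ‖eqE n (C ρ)‖ = ‖eqE n ρ‖ := fun ρ => by
    rw [hC]; exact norm_eqE_unitary hU ρ
  have hDnorm : ∀ ρ, ‖eqE n (D ρ)‖ ≤ ‖eqE n ρ‖ := fun ρ => by
    rw [hD]; exact norm_eqE_kraus A hA1 hA2 ρ
  have hLnorm : ∀ ρ, ‖eqE n (L ρ)‖ ≤ ‖eqE n ρ‖ := by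
    intro ρ
    rw [hLapp, _root_.map_add, _root_.map_smul, _root_.map_smul]
    calc ‖(q : ℂ) • eqE n (C ρ) + (p : ℂ) • eqE n (D ρ)‖
        ≤ ‖(q : ℂ) • eqE n (C ρ)‖ + ‖(p : ℂ) • eqE n (D ρ)‖ := norm_add_le _ _
      _ = q * ‖eqE n (C ρ)‖ + p * ‖eqE n (D ρ)‖ := by
          rw [norm_smul, norm_smul, Complex.norm_real, Complex.norm_real,
            Real.norm_eq_abs, Real.norm_eq_abs, abs_of_pos hq0, abs_of_pos hp]
      _ ≤ q * ‖eqE n ρ‖ + p * ‖eqE n ρ‖ := by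
          rw [hCnorm]
          have := hDnorm ρ
          nlinarith
      _ = ‖eqE n ρ‖ := by rw [hq]; ring
  -- key: unimodular eigenvectors of L are fixed by C and D
  have key : ∀ (lam : ℂ) (ρ : Matrix (Fin n) (Fin n) ℂ),
      ρ ≠ 0 → L ρ = lam • ρ → ‖lam‖ = 1 → D ρ = lam • ρ := by
    intro lam ρ hρ hLρ habs
    set a := eqE n (C ρ) with ha
    set b := eqE n (D ρ) with hb
    set r := ‖eqE n ρ‖ with hr
    set s := ‖b‖ with hs
    have har : ‖a‖ = r := hCnorm ρ
    have hsr : s ≤ r := hDnorm ρ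
    have hr0 : 0 < r := by
      rw [hr, norm_pos_iff]
      simp only [ne_eq, EmbeddingLike.map_eq_zero_iff]
      exact hρ
    have hsum : (q : ℂ) • a + (p : ℂ) • b = eqE n (L ρ) := by
      rw [hLapp, _root_.map_add, _root_.map_smul, _root_.map_smul]
    have hnormL : ‖(q : ℂ) • a + (p : ℂ) • b‖ = r := by
      rw [hsum, hLρ, _root_.map_smul, norm_smul, habs, one_mul]
    clear_value a b r s
    -- expand
    have hexp := norm_add_sq (𝕜 := ℂ) ((q : ℂ) • a) ((p : ℂ) • b)
    rw [hnormL] at hexp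
    have hre : RCLike.re (inner ℂ ((q : ℂ) • a) ((p : ℂ) • b) : ℂ)
        = q * p * (inner ℂ a b : ℂ).re := by
      rw [inner_smul_left, inner_smul_right]
      simp [Complex.conj_ofReal]
      ring
    have hna : ‖(q : ℂ) • a‖ = q * r := by
      rw [norm_smul, Complex.norm_real, Real.norm_eq_abs, abs_of_pos hq0, har]
    have hnb : ‖(p : ℂ) • b‖ = p * s := by
      rw [norm_smul, Complex.norm_real, Real.norm_eq_abs, abs_of_pos hp, hs]
    rw [hre, hna, hnb] at hexp
    -- now r^2 = (q r)^2 + 2 q p t + (p s)^2 with t = re inner a b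
    have hab : ‖a - b‖ ^ 2 = ‖a‖ ^ 2 - 2 * (inner ℂ a b : ℂ).re + ‖b‖ ^ 2 := by
      have := norm_sub_sq (𝕜 := ℂ) a b
      simpa using this
    rw [har, ← hs] at hab
    have h1q : q + p = 1 := by rw [hq]; ring
    have key0 : q * p * ‖a - b‖ ^ 2 = p * (s ^ 2 - r ^ 2) := by
      linear_combination (q * p) * hab + hexp + ((1 + q) * r ^ 2 + p * s ^ 2) * h1q
    have hs0 : (0 : ℝ) ≤ s := by rw [hs]; exact norm_nonneg b
    have hs2 : s ^ 2 ≤ r ^ 2 := pow_le_pow_left₀ hs0 hsr 2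
    have habz : ‖a - b‖ ^ 2 ≤ 0 := by nlinarith [key0, hs2, mul_pos hq0 hp, sq_nonneg ‖a - b‖]
    have hab0 : a = b := by
      have h0 : ‖a - b‖ = 0 :=
        le_antisymm (by nlinarith [norm_nonneg (a - b)]) (norm_nonneg _)
      exact sub_eq_zero.mp (norm_eq_zero.mp h0)
    have hCD : C ρ = D ρ := (eqE n).injective (by rw [← ha, ← hb]; exact hab0)
    have : lam • ρ = D ρ := by
      rw [← hLρ, hLapp, hCD, ← add_smul, hqp, one_smul]
    exact this.symm
  constructor
  · constructor
    · exact ⟨1, hone, hL1⟩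
    · intro lam ρ hρ hLρ habs
      exact hDonly lam ρ hρ (key lam ρ hρ hLρ habs) habs
  -- multiplicity part
  intro hAlg
  have hkerD : LinearMap.ker (D - 1) = Submodule.span ℂ {(1 : Matrix (Fin n) (Fin n) ℂ)} := by
    have hmem : (1 : Matrix (Fin n) (Fin n) ℂ) ∈ LinearMap.ker (D - 1) := by
      rw [LinearMap.mem_ker, LinearMap.sub_apply, Module.End.one_apply, hD1, sub_self]
    have hspanle : Submodule.span ℂ {(1 : Matrix (Fin n) (Fin n) ℂ)} ≤ LinearMap.ker (D - 1) := by
      rw [Submodule.span_le, Set.singleton_subset_iff]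
      exact hmem
    have hfr : Module.finrank ℂ (LinearMap.ker (D - 1)) ≤ 1 := by
      have hle : LinearMap.ker (D - 1)
          ≤ ⨆ k : ℕ, LinearMap.ker ((D - (1 : ℂ) • (1 : Module.End ℂ (Matrix (Fin n) (Fin n) ℂ))) ^ k) := by
        have : LinearMap.ker (D - 1)
            = LinearMap.ker ((D - (1 : ℂ) • (1 : Module.End ℂ (Matrix (Fin n) (Fin n) ℂ))) ^ 1) := by
          rw [pow_one, one_smul]
        rw [this]
        exact le_iSup (fun k : ℕ => LinearMap.ker ((D - (1 : ℂ) • (1 : Module.End ℂ (Matrix (Fin n) (Fin n) ℂ))) ^ k)) 1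
      have hAlg' : Module.finrank ℂ
          (⨆ k : ℕ, LinearMap.ker ((D - (1 : ℂ) • (1 : Module.End ℂ (Matrix (Fin n) (Fin n) ℂ))) ^ k) : Submodule ℂ (Matrix (Fin n) (Fin n) ℂ)) = 1 := hAlg
      calc Module.finrank ℂ (LinearMap.ker (D - 1))
          ≤ Module.finrank ℂ
            (⨆ k : ℕ, LinearMap.ker ((D - (1 : ℂ) • (1 : Module.End ℂ (Matrix (Fin n) (Fin n) ℂ))) ^ k) : Submodule ℂ (Matrix (Fin n) (Fin n) ℂ)) := Submodule.finrank_mono hle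
        _ = 1 := hAlg'
    refine (Submodule.eq_of_le_of_finrank_le hspanle ?_).symm
    rw [finrank_span_singleton hone]
    exact hfr
  have hkerL : LinearMap.ker (L - 1) = Submodule.span ℂ {(1 : Matrix (Fin n) (Fin n) ℂ)} := by
    apply le_antisymm
    · intro ρ hρmem
      rw [LinearMap.mem_ker, LinearMap.sub_apply, Module.End.one_apply, sub_eq_zero] at hρmem
      by_cases hρ : ρ = 0
      · rw [hρ]; exact Submodule.zero_mem _
      · have hDρ : D ρ = (1 : ℂ) • ρ := by
          apply key 1 ρ hρ
          · rw [hρmem, one_smul]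
          · simp
        have : ρ ∈ LinearMap.ker (D - 1) := by
          rw [LinearMap.mem_ker, LinearMap.sub_apply, Module.End.one_apply, hDρ, one_smul, sub_self]
        rwa [hkerD] at this
    · rw [Submodule.span_le, Set.singleton_subset_iff]
      rw [SetLike.mem_coe, LinearMap.mem_ker, LinearMap.sub_apply, Module.End.one_apply, hL1, sub_self]
  -- no generalized eigenvectors of L beyond the kernel
  have hJ : ∀ σ, (L - 1) ((L - 1) σ) = 0 → (L - 1) σ = 0 := by
    intro σ hσ
    by_contra hτ
    set τ := (L - 1) σ with hτdef
    have hLτ : L τ = τ := by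
      rw [LinearMap.sub_apply, Module.End.one_apply, sub_eq_zero] at hσ
      exact hσ
    have hLσ : L σ = σ + τ := by
      rw [hτdef, LinearMap.sub_apply, Module.End.one_apply]
      abel
    clear_value τ
    have hpow : ∀ k : ℕ, (L ^ k) σ = σ + (k : ℂ) • τ := by
      intro k
      induction k with
      | zero => simp
      | succ k ih =>
        rw [pow_succ', Module.End.mul_apply, ih, _root_.map_add, _root_.map_smul, hLσ, hLτ]
        push_cast
        rw [add_smul, one_smul]
        abel
    have hLkn : ∀ k : ℕ, ‖eqE n ((L ^ k) σ)‖ ≤ ‖eqE n σ‖ := by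
      intro k
      induction k with
      | zero => simp
      | succ k ih =>
        rw [pow_succ', Module.End.mul_apply]
        exact (hLnorm _).trans ih
    have hτn : 0 < ‖eqE n τ‖ := by
      rw [norm_pos_iff]
      simp only [ne_eq, EmbeddingLike.map_eq_zero_iff]
      exact hτ
    obtain ⟨k, hk⟩ := exists_nat_gt ((2 * ‖eqE n σ‖ + 1) / ‖eqE n τ‖)
    have hk2 : 2 * ‖eqE n σ‖ + 1 < k * ‖eqE n τ‖ := by
      rw [div_lt_iff₀ hτn] at hk
      linarith
    have h1 : ‖eqE n ((L ^ k) σ)‖ ≤ ‖eqE n σ‖ := hLkn k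
    have h2 : eqE n ((L ^ k) σ) = eqE n σ + (k : ℂ) • eqE n τ := by
      rw [hpow k, _root_.map_add, _root_.map_smul]
    have h3 : (k : ℝ) * ‖eqE n τ‖ - ‖eqE n σ‖ ≤ ‖eqE n ((L ^ k) σ)‖ := by
      have h4 : ‖(k : ℂ) • eqE n τ‖ ≤ ‖eqE n ((L ^ k) σ)‖ + ‖eqE n σ‖ := by
        calc ‖(k : ℂ) • eqE n τ‖ = ‖eqE n ((L ^ k) σ) - eqE n σ‖ := by
              rw [h2, add_sub_cancel_left]
          _ ≤ ‖eqE n ((L ^ k) σ)‖ + ‖eqE n σ‖ := norm_sub_le _ _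
      have h5 : ‖(k : ℂ) • eqE n τ‖ = (k : ℝ) * ‖eqE n τ‖ := by
        rw [norm_smul, Complex.norm_natCast]
      linarith
    obtain ⟨X, hX⟩ : ∃ x, ‖eqE n ((L ^ k) σ)‖ = x := ⟨_, rfl⟩
    obtain ⟨S, hS⟩ : ∃ x, ‖eqE n σ‖ = x := ⟨_, rfl⟩
    obtain ⟨T, hT⟩ : ∃ x, ‖eqE n τ‖ = x := ⟨_, rfl⟩
    rw [hX, hS] at h1
    rw [hX, hS, hT] at h3
    rw [hS, hT] at hk2
    linarith
  have hkerpow : ∀ k : ℕ, LinearMap.ker ((L - 1) ^ k) ≤ LinearMap.ker (L - 1) := by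
    intro k
    induction k with
    | zero =>
      intro x hx
      simp only [pow_zero, LinearMap.mem_ker, Module.End.one_apply] at hx
      rw [LinearMap.mem_ker, hx, map_zero]
    | succ k ih =>
      intro x hx
      rw [LinearMap.mem_ker, pow_succ, Module.End.mul_apply] at hx
      have : (L - 1) x ∈ LinearMap.ker ((L - 1) ^ k) := by rwa [LinearMap.mem_ker]
      have h2 : (L - 1) ((L - 1) x) = 0 := by
        have := ih this
        rwa [LinearMap.mem_ker] at this
      rw [LinearMap.mem_ker]
      exact hJ x h2
  have hsup : (⨆ k : ℕ, LinearMap.ker ((L - (1 : ℂ) • (1 : Module.End ℂ (Matrix (Fin n) (Fin n) ℂ))) ^ k))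
      = Submodule.span ℂ {(1 : Matrix (Fin n) (Fin n) ℂ)} := by
    simp only [one_smul]
    apply le_antisymm
    · exact iSup_le fun k => (hkerpow k).trans hkerL.le
    · rw [← hkerL]
      have : LinearMap.ker (L - 1) = LinearMap.ker ((L - 1) ^ 1) := by rw [pow_one]
      rw [this]
      exact le_iSup (fun k : ℕ => LinearMap.ker ((L - 1) ^ k)) 1
  unfold algMult
  rw [hsup, finrank_span_singleton hone]
end

section
/- If the map L₁(ρ) = ∑_{j=1}^m Π_jUρU*Π_j satisfies the eigenvalue condition, then for every p with 0 < p ≤ 1 and q = 1 − p, the map L_p(ρ) = q·UρU* + p·∑_{j=1}^m Π_jUρU*Π_j satisfies the eigenvalue condition. -/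
open Matrix

/-- `T` satisfies the *eigenvalue condition*: `1` is an eigenvalue of `T` of algebraic
multiplicity one, and every other eigenvalue of `T` has absolute value strictly less
than `1`. -/
def EigenCond {H : Type*} [AddCommGroup H] [Module ℂ H] (T : Module.End ℂ H) : Prop :=
  (∃ v, v ≠ 0 ∧ T v = v) ∧ algMult T 1 = 1 ∧
    ∀ (lam : ℂ) (v : H), v ≠ 0 → T v = lam • v → lam ≠ 1 → ‖lam‖ < 1

section Aux
variable {n m : ℕ}

noncomputable def mip (x y : Matrix (Fin n) (Fin n) ℂ) : ℂ := (xᴴ * y).trace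

noncomputable def mnrm (x : Matrix (Fin n) (Fin n) ℂ) : ℝ :=
  ∑ i, ∑ j, Complex.normSq (x i j)

noncomputable def Bop (P : Fin m → Matrix (Fin n) (Fin n) ℂ) (x : Matrix (Fin n) (Fin n) ℂ) :
    Matrix (Fin n) (Fin n) ℂ := ∑ j, P j * x * P j

lemma mnrm_nonneg (x : Matrix (Fin n) (Fin n) ℂ) : 0 ≤ mnrm x :=
  Finset.sum_nonneg fun _ _ => Finset.sum_nonneg fun _ _ => Complex.normSq_nonneg _

lemma mnrm_eq_zero {x : Matrix (Fin n) (Fin n) ℂ} (h : mnrm x = 0) : x = 0 := by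
  ext i j
  have h1 := (Finset.sum_eq_zero_iff_of_nonneg
    (fun i _ => Finset.sum_nonneg fun j _ => Complex.normSq_nonneg _)).1 h i (Finset.mem_univ i)
  have h2 := (Finset.sum_eq_zero_iff_of_nonneg
    (fun j _ => Complex.normSq_nonneg _)).1 h1 j (Finset.mem_univ j)
  simpa using Complex.normSq_eq_zero.1 h2

lemma mip_self (x : Matrix (Fin n) (Fin n) ℂ) : mip x x = (mnrm x : ℂ) := by
  simp only [mip, Matrix.trace, Matrix.diag, Matrix.mul_apply, mnrm, conjTranspose_apply]
  push_cast
  rw [Finset.sum_comm]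
  refine Finset.sum_congr rfl fun i _ => Finset.sum_congr rfl fun j _ => ?_
  rw [Complex.star_def, Complex.normSq_eq_conj_mul_self]

lemma mip_add_left (x y z : Matrix (Fin n) (Fin n) ℂ) : mip (x + y) z = mip x z + mip y z := by
  simp [mip, Matrix.conjTranspose_add, Matrix.add_mul]

lemma mip_add_right (x y z : Matrix (Fin n) (Fin n) ℂ) : mip x (y + z) = mip x y + mip x z := by
  simp [mip, Matrix.mul_add]

lemma mip_sub_right (x y z : Matrix (Fin n) (Fin n) ℂ) : mip x (y - z) = mip x y - mip x z := by
  simp [mip, Matrix.mul_sub]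

lemma mip_smul_left (c : ℂ) (x y : Matrix (Fin n) (Fin n) ℂ) :
    mip (c • x) y = (starRingEnd ℂ) c * mip x y := by
  simp [mip, Matrix.conjTranspose_smul, Matrix.smul_mul, Matrix.trace_smul, smul_eq_mul]

lemma mip_smul_right (c : ℂ) (x y : Matrix (Fin n) (Fin n) ℂ) :
    mip x (c • y) = c * mip x y := by
  simp [mip, Matrix.mul_smul, Matrix.trace_smul, smul_eq_mul]

lemma mip_conj (x y : Matrix (Fin n) (Fin n) ℂ) : mip y x = (starRingEnd ℂ) (mip x y) := by
  have : (yᴴ * x) = (xᴴ * y)ᴴ := by simp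
  rw [mip, this, Matrix.trace_conjTranspose, mip]
  rfl

lemma mnrm_expand (x y : Matrix (Fin n) (Fin n) ℂ) (t : ℝ) :
    mnrm (x + (t : ℂ) • y) = mnrm x + 2 * t * (mip x y).re + t ^ 2 * mnrm y := by
  apply Complex.ofReal_injective
  rw [← mip_self]
  simp only [mip_add_left, mip_add_right, mip_smul_left, mip_smul_right]
  rw [mip_conj x y]
  rw [mip_self x, mip_self y, Complex.conj_ofReal]
  have hz := Complex.add_conj (mip x y)
  push_cast at hz ⊢
  linear_combination (t : ℂ) * hz

lemma Bop_idem (P : Fin m → Matrix (Fin n) (Fin n) ℂ)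
    (hidem : ∀ j, P j * P j = P j) (horth : ∀ i j, i ≠ j → P i * P j = 0)
    (x : Matrix (Fin n) (Fin n) ℂ) : Bop P (Bop P x) = Bop P x := by
  unfold Bop
  refine Finset.sum_congr rfl fun i _ => ?_
  rw [Finset.mul_sum, Finset.sum_mul]
  rw [Finset.sum_eq_single i]
  · rw [show P i * (P i * x * P i) * P i = (P i * P i) * x * (P i * P i) by noncomm_ring,
      hidem i]
  · intro j _ hj
    rw [show P i * (P j * x * P j) * P i = (P i * P j) * x * (P j * P i) by noncomm_ring,
      horth i j (Ne.symm hj)]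
    simp
  · simp

lemma Bop_selfadj (P : Fin m → Matrix (Fin n) (Fin n) ℂ)
    (hherm : ∀ j, (P j)ᴴ = P j) (x y : Matrix (Fin n) (Fin n) ℂ) :
    mip (Bop P x) y = mip x (Bop P y) := by
  unfold mip Bop
  rw [conjTranspose_sum, Finset.sum_mul, Matrix.trace_sum, Matrix.mul_sum, Matrix.trace_sum]
  refine Finset.sum_congr rfl fun j _ => ?_
  rw [conjTranspose_mul, conjTranspose_mul, hherm j]
  rw [show P j * (xᴴ * P j) * y = P j * (xᴴ * P j * y) by noncomm_ring,
    Matrix.trace_mul_comm]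
  congr 1
  noncomm_ring

lemma mip_unitary {U : Matrix (Fin n) (Fin n) ℂ} (hU' : Uᴴ * U = 1)
    (x y : Matrix (Fin n) (Fin n) ℂ) :
    mip (U * x * Uᴴ) (U * y * Uᴴ) = mip x y := by
  unfold mip
  have h1 : (U * x * Uᴴ)ᴴ * (U * y * Uᴴ) = U * (xᴴ * (Uᴴ * U) * y) * Uᴴ := by
    simp only [conjTranspose_mul, conjTranspose_conjTranspose]
    noncomm_ring
  rw [h1, hU']
  rw [show U * (xᴴ * 1 * y) * Uᴴ = U * (xᴴ * y) * Uᴴ by noncomm_ring]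
  rw [Matrix.trace_mul_cycle, ← Matrix.mul_assoc, hU', Matrix.one_mul]

lemma mnrm_smul (c : ℂ) (x : Matrix (Fin n) (Fin n) ℂ) :
    mnrm (c • x) = Complex.normSq c * mnrm x := by
  apply Complex.ofReal_injective
  rw [← mip_self, mip_smul_left, mip_smul_right, mip_self]
  rw [← mul_assoc, ← Complex.normSq_eq_conj_mul_self]
  push_cast
  ring

lemma mnrm_unitary {U : Matrix (Fin n) (Fin n) ℂ} (hU' : Uᴴ * U = 1)
    (x : Matrix (Fin n) (Fin n) ℂ) : mnrm (U * x * Uᴴ) = mnrm x := by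
  apply Complex.ofReal_injective
  rw [← mip_self, ← mip_self, mip_unitary hU']

lemma mip_Bop_orth (P : Fin m → Matrix (Fin n) (Fin n) ℂ)
    (hherm : ∀ j, (P j)ᴴ = P j) (hidem : ∀ j, P j * P j = P j)
    (horth : ∀ i j, i ≠ j → P i * P j = 0) (σ : Matrix (Fin n) (Fin n) ℂ) :
    mip (Bop P σ) (σ - Bop P σ) = 0 := by
  rw [mip_sub_right, Bop_selfadj P hherm σ σ, Bop_selfadj P hherm σ (Bop P σ),
    Bop_idem P hidem horth, sub_self]

lemma mnrm_decomp (P : Fin m → Matrix (Fin n) (Fin n) ℂ)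
    (hherm : ∀ j, (P j)ᴴ = P j) (hidem : ∀ j, P j * P j = P j)
    (horth : ∀ i j, i ≠ j → P i * P j = 0) (σ : Matrix (Fin n) (Fin n) ℂ) (t : ℝ) :
    mnrm (Bop P σ + (t : ℂ) • (σ - Bop P σ))
      = mnrm (Bop P σ) + t ^ 2 * mnrm (σ - Bop P σ) := by
  rw [mnrm_expand, mip_Bop_orth P hherm hidem horth σ]
  simp

lemma mnrm_split (P : Fin m → Matrix (Fin n) (Fin n) ℂ)
    (hherm : ∀ j, (P j)ᴴ = P j) (hidem : ∀ j, P j * P j = P j)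
    (horth : ∀ i j, i ≠ j → P i * P j = 0) (σ : Matrix (Fin n) (Fin n) ℂ) :
    mnrm σ = mnrm (Bop P σ) + mnrm (σ - Bop P σ) := by
  have h := mnrm_decomp P hherm hidem horth σ 1
  simpa using h


lemma mnrm_pos {x : Matrix (Fin n) (Fin n) ℂ} (hx : x ≠ 0) : 0 < mnrm x := by
  rcases lt_or_eq_of_le (mnrm_nonneg x) with h | h
  · exact h
  · exact absurd (mnrm_eq_zero h.symm) hx

lemma key_comb {U : Matrix (Fin n) (Fin n) ℂ} (P : Fin m → Matrix (Fin n) (Fin n) ℂ)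
    (p : ℝ) (ρ : Matrix (Fin n) (Fin n) ℂ) :
    ((1 - p : ℝ) : ℂ) • (U * ρ * Uᴴ) + (p : ℂ) • Bop P (U * ρ * Uᴴ)
      = Bop P (U * ρ * Uᴴ) + ((1 - p : ℝ) : ℂ) • (U * ρ * Uᴴ - Bop P (U * ρ * Uᴴ)) := by
  push_cast
  module

lemma key_forward {U : Matrix (Fin n) (Fin n) ℂ} (hU' : Uᴴ * U = 1)
    (P : Fin m → Matrix (Fin n) (Fin n) ℂ)
    (hherm : ∀ j, (P j)ᴴ = P j) (hidem : ∀ j, P j * P j = P j)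
    (horth : ∀ i j, i ≠ j → P i * P j = 0)
    (p : ℝ) (hp : 0 < p) (hp1 : p ≤ 1) (lam : ℂ)
    (ρ : Matrix (Fin n) (Fin n) ℂ) (hρ : ρ ≠ 0)
    (heig : ((1 - p : ℝ) : ℂ) • (U * ρ * Uᴴ) + (p : ℂ) • Bop P (U * ρ * Uᴴ) = lam • ρ)
    (hlam : 1 ≤ ‖lam‖) :
    Bop P (U * ρ * Uᴴ) = U * ρ * Uᴴ ∧ ‖lam‖ = 1 := by
  set σ := U * ρ * Uᴴ with hσ
  have hρσ : mnrm σ = mnrm ρ := mnrm_unitary hU' ρ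
  have hsplit := mnrm_split P hherm hidem horth σ
  have heq : Complex.normSq lam * mnrm ρ
      = mnrm (Bop P σ) + (1 - p) ^ 2 * mnrm (σ - Bop P σ) := by
    rw [← mnrm_smul, ← heig, key_comb, mnrm_decomp P hherm hidem horth]
  have h2 : 1 ≤ Complex.normSq lam := by
    rw [← Complex.sq_norm]; nlinarith
  have hρpos : 0 < mnrm ρ := mnrm_pos hρ
  have hkey : (Complex.normSq lam - 1) * mnrm (Bop P σ)
      + (Complex.normSq lam - (1 - p) ^ 2) * mnrm (σ - Bop P σ) = 0 := by
    linear_combination heq - Complex.normSq lam * hsplit + Complex.normSq lam * hρσ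
  have hcoef : p ≤ Complex.normSq lam - (1 - p) ^ 2 := by nlinarith
  have hwle : mnrm (σ - Bop P σ) ≤ 0 := by
    nlinarith [hkey, hcoef, mul_nonneg (sub_nonneg.2 h2) (mnrm_nonneg (Bop P σ)),
      mnrm_nonneg (σ - Bop P σ)]
  have hw0 : mnrm (σ - Bop P σ) = 0 := le_antisymm hwle (mnrm_nonneg _)
  have hb : Bop P σ = σ := by
    have h := mnrm_eq_zero hw0
    exact (sub_eq_zero.1 h).symm
  refine ⟨hb, ?_⟩
  have hR : mnrm ρ = mnrm (Bop P σ) := by rw [← hρσ, hsplit, hw0, add_zero]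
  have hN1 : Complex.normSq lam = 1 := by
    have h := heq
    rw [hw0, mul_zero, add_zero, ← hR] at h
    have h' : Complex.normSq lam * mnrm ρ = 1 * mnrm ρ := by rw [h, one_mul]
    exact mul_right_cancel₀ (ne_of_gt hρpos) h'
  have h3 : ‖lam‖ ^ 2 = 1 := by rw [Complex.sq_norm, hN1]
  have h4 : (‖lam‖ - 1) * (‖lam‖ + 1) = 0 := by linear_combination h3
  rcases mul_eq_zero.1 h4 with h5 | h5
  · linarith
  · nlinarith [norm_nonneg lam]

lemma key_backward {U : Matrix (Fin n) (Fin n) ℂ} (hU' : Uᴴ * U = 1)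
    (P : Fin m → Matrix (Fin n) (Fin n) ℂ)
    (hherm : ∀ j, (P j)ᴴ = P j) (hidem : ∀ j, P j * P j = P j)
    (horth : ∀ i j, i ≠ j → P i * P j = 0) (lam : ℂ)
    (ρ : Matrix (Fin n) (Fin n) ℂ) (hρ : ρ ≠ 0)
    (heig : Bop P (U * ρ * Uᴴ) = lam • ρ)
    (hlam : 1 ≤ ‖lam‖) :
    Bop P (U * ρ * Uᴴ) = U * ρ * Uᴴ := by
  set σ := U * ρ * Uᴴ with hσ
  have hρσ : mnrm σ = mnrm ρ := mnrm_unitary hU' ρ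
  have hsplit := mnrm_split P hherm hidem horth σ
  have heq : Complex.normSq lam * mnrm ρ = mnrm (Bop P σ) := by
    rw [← mnrm_smul, ← heig]
  have h2 : 1 ≤ Complex.normSq lam := by
    rw [← Complex.sq_norm]; nlinarith
  have hwle : mnrm (σ - Bop P σ) ≤ 0 := by
    nlinarith [mul_nonneg (sub_nonneg.2 h2) (mnrm_nonneg ρ)]
  have hw0 : mnrm (σ - Bop P σ) = 0 := le_antisymm hwle (mnrm_nonneg _)
  have h := mnrm_eq_zero hw0
  exact (sub_eq_zero.1 h).symm

lemma key_contr {U : Matrix (Fin n) (Fin n) ℂ} (hU' : Uᴴ * U = 1)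
    (P : Fin m → Matrix (Fin n) (Fin n) ℂ)
    (hherm : ∀ j, (P j)ᴴ = P j) (hidem : ∀ j, P j * P j = P j)
    (horth : ∀ i j, i ≠ j → P i * P j = 0)
    (p : ℝ) (hp0 : 0 ≤ p) (hp1 : p ≤ 1) (x : Matrix (Fin n) (Fin n) ℂ) :
    mnrm (((1 - p : ℝ) : ℂ) • (U * x * Uᴴ) + (p : ℂ) • Bop P (U * x * Uᴴ)) ≤ mnrm x := by
  rw [key_comb, mnrm_decomp P hherm hidem horth]
  have hsplit := mnrm_split P hherm hidem horth (U * x * Uᴴ)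
  have hx := mnrm_unitary hU' x
  nlinarith [mul_nonneg (show (0:ℝ) ≤ 1 - (1 - p) ^ 2 by nlinarith)
    (mnrm_nonneg (U * x * Uᴴ - Bop P (U * x * Uᴴ)))]


lemma collapse (T : Module.End ℂ (Matrix (Fin n) (Fin n) ℂ))
    (hc : ∀ x, mnrm (T x) ≤ mnrm x) (v : Matrix (Fin n) (Fin n) ℂ)
    (h2 : (T - 1) ((T - 1) v) = 0) : (T - 1) v = 0 := by
  simp only [LinearMap.sub_apply, Module.End.one_apply] at h2 ⊢
  set w := T v - v with hw
  have hTw : T w = w := by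
    have := h2
    exact sub_eq_zero.1 this
  have hTv : T v = v + w := by rw [hw]; abel
  have hpow : ∀ k : ℕ, (T ^ k) v = v + ((k : ℝ) : ℂ) • w := by
    intro k
    induction k with
    | zero => simp
    | succ k ih =>
      rw [pow_succ', Module.End.mul_apply, ih, map_add, map_smul T, hTw, hTv]
      push_cast
      module
  have hbound : ∀ k : ℕ, mnrm ((T ^ k) v) ≤ mnrm v := by
    intro k
    induction k with
    | zero => simp
    | succ k ih =>
      rw [pow_succ', Module.End.mul_apply]
      exact le_trans (hc _) ih
  have hineq : ∀ k : ℕ, 2 * (k : ℝ) * (mip v w).re + (k : ℝ) ^ 2 * mnrm w ≤ 0 := by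
    intro k
    have h := hbound k
    rw [hpow k, mnrm_expand v w (k : ℝ)] at h
    linarith
  have hwz : w = 0 := by
    by_contra hne
    have hcpos : 0 < mnrm w := mnrm_pos hne
    set r := (mip v w).re with hr
    obtain ⟨k, hk⟩ := exists_nat_gt ((2 * |r| + 1) / mnrm w)
    have hkc : 2 * |r| + 1 < (k : ℝ) * mnrm w := by
      rw [div_lt_iff₀ hcpos] at hk
      linarith
    have hki := hineq k
    have hint1 : (k : ℝ) * ((k : ℝ) * mnrm w - (2 * |r| + 1)) ≥ 0 :=
      mul_nonneg (Nat.cast_nonneg k) (by linarith)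
    have hint2 : (k : ℝ) * (r + |r|) ≥ 0 :=
      mul_nonneg (Nat.cast_nonneg k) (by linarith [neg_abs_le r])
    nlinarith [abs_nonneg r, (by positivity : (0:ℝ) ≤ (k:ℝ))]
  exact hwz

lemma gen_ker (T : Module.End ℂ (Matrix (Fin n) (Fin n) ℂ))
    (hcol : ∀ v, (T - 1) ((T - 1) v) = 0 → (T - 1) v = 0) :
    (⨆ k : ℕ, LinearMap.ker ((T - (1 : ℂ) • (1 : Module.End ℂ (Matrix (Fin n) (Fin n) ℂ))) ^ k))
      = LinearMap.ker (T - 1) := by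
  rw [one_smul]
  have hmono : ∀ k : ℕ, LinearMap.ker ((T - 1) ^ (k + 1)) ≤ LinearMap.ker (T - 1) := by
    intro k
    induction k with
    | zero => rw [pow_one]
    | succ k ih =>
      intro v hv
      rw [LinearMap.mem_ker] at hv ⊢
      have hstep : ((T - 1) ^ (k + 1)) ((T - 1) v) = 0 := by
        rw [← Module.End.mul_apply, ← pow_succ]
        exact hv
      have h1 := ih (LinearMap.mem_ker.2 hstep)
      rw [LinearMap.mem_ker] at h1
      exact hcol v h1
  apply le_antisymm
  · apply iSup_le
    intro k
    cases k with
    | zero =>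
      rw [pow_zero, Module.End.one_eq_id, LinearMap.ker_id]
      exact bot_le
    | succ k => exact hmono k
  · exact le_iSup_of_le 1 (by rw [pow_one])

end Aux

/-- Let `U` be unitary and `Π₁, …, Π_m` mutually orthogonal orthogonal
projections with `∑ Πⱼ = I`.  For `0 ≤ p ≤ 1`, `q = 1 - p`, let
`L_p(ρ) = q·UρU* + p·∑ⱼ ΠⱼUρU*Πⱼ`.  If `L₁` satisfies the eigenvalue condition, then `L_p`
satisfies the eigenvalue condition for every `0 < p ≤ 1`. -/
theorem stmt6 {n m : ℕ} (hn : 1 ≤ n)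
    (U : Matrix (Fin n) (Fin n) ℂ) (hU : U ∈ Matrix.unitaryGroup (Fin n) ℂ)
    (P : Fin m → Matrix (Fin n) (Fin n) ℂ)
    (hherm : ∀ j, (P j)ᴴ = P j) (hidem : ∀ j, P j * P j = P j)
    (horth : ∀ i j, i ≠ j → P i * P j = 0)
    (hsum : ∑ j, P j = 1)
    (Lp : ℝ → Module.End ℂ (Matrix (Fin n) (Fin n) ℂ))
    (hLp : ∀ (p : ℝ) (ρ), Lp p ρ =
      ((1 - p : ℝ) : ℂ) • (U * ρ * Uᴴ) + (p : ℂ) • ∑ j, P j * (U * ρ * Uᴴ) * P j)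
    (h1 : EigenCond (Lp 1)) :
    ∀ p : ℝ, 0 < p → p ≤ 1 → EigenCond (Lp p) := by
  intro p hp hp1
  have hU' : Uᴴ * U = 1 := by
    have h := Unitary.star_mul_self_of_mem hU
    rwa [Matrix.star_eq_conjTranspose] at h
  have hLp' : ∀ (q : ℝ) (ρ), Lp q ρ
      = ((1 - q : ℝ) : ℂ) • (U * ρ * Uᴴ) + (q : ℂ) • Bop P (U * ρ * Uᴴ) := by
    intro q ρ; rw [hLp]; rfl
  have hL1 : ∀ ρ, Lp 1 ρ = Bop P (U * ρ * Uᴴ) := by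
    intro ρ
    rw [hLp' 1]
    norm_num
  -- the fixed vector
  obtain ⟨v, hv0, hvfix⟩ := h1.1
  have hBv : Bop P (U * v * Uᴴ) = (1 : ℂ) • v := by
    rw [← hL1 v, hvfix, one_smul]
  have hBσ := key_backward hU' P hherm hidem horth 1 v hv0 hBv (by simp)
  have hσv : U * v * Uᴴ = v := by
    rw [← hBσ, hBv, one_smul]
  have hfixp : Lp p v = v := by
    rw [hLp' p, hBσ, hσv]
    push_cast
    module
  -- general transfer of unimodular eigenvectors
  have htrans : ∀ (lam : ℂ) (x : Matrix (Fin n) (Fin n) ℂ), x ≠ 0 → Lp p x = lam • x →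
      1 ≤ ‖lam‖ → Lp 1 x = lam • x ∧ ‖lam‖ = 1 := by
    intro lam x hx0 hfix hab
    have heig' : ((1 - p : ℝ) : ℂ) • (U * x * Uᴴ) + (p : ℂ) • Bop P (U * x * Uᴴ) = lam • x := by
      rw [← hLp' p, hfix]
    obtain ⟨hB, habs⟩ := key_forward hU' P hherm hidem horth p hp hp1 lam x hx0 heig' hab
    have hσx : U * x * Uᴴ = lam • x := by
      rw [hB, ← add_smul] at heig'
      have hco : ((1 - p : ℝ) : ℂ) + (p : ℂ) = 1 := by push_cast; ring
      rwa [hco, one_smul] at heig'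
    exact ⟨by rw [hL1, hB, hσx], habs⟩
  refine ⟨⟨v, hv0, hfixp⟩, ?_, ?_⟩
  · -- algebraic multiplicity
    have hc : ∀ x, mnrm (Lp p x) ≤ mnrm x := by
      intro x
      rw [hLp' p]
      exact key_contr hU' P hherm hidem horth p hp.le hp1 x
    have hker := gen_ker (Lp p) (fun u hu => collapse (Lp p) hc u hu)
    unfold algMult
    rw [one_smul] at hker ⊢
    rw [hker]
    have hle : LinearMap.ker (Lp p - 1)
        ≤ (⨆ k : ℕ, LinearMap.ker ((Lp 1 - (1 : ℂ) • (1 : Module.End ℂ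
            (Matrix (Fin n) (Fin n) ℂ))) ^ k)) := by
      intro x hx
      rcases eq_or_ne x 0 with rfl | hx0
      · exact zero_mem _
      · have hfix : Lp p x = x := by
          have h := LinearMap.mem_ker.1 hx
          simp only [LinearMap.sub_apply, Module.End.one_apply] at h
          exact sub_eq_zero.1 h
        obtain ⟨h1x, -⟩ := htrans 1 x hx0 (by rw [hfix, one_smul]) (by simp)
        refine Submodule.mem_iSup_of_mem 1 ?_
        rw [one_smul, pow_one, LinearMap.mem_ker]
        simp only [LinearMap.sub_apply, Module.End.one_apply, h1x, one_smul, sub_self]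
    have hG1 : Module.finrank ℂ
        (⨆ k : ℕ, LinearMap.ker ((Lp 1 - (1 : ℂ) • (1 : Module.End ℂ
          (Matrix (Fin n) (Fin n) ℂ))) ^ k) : Submodule ℂ (Matrix (Fin n) (Fin n) ℂ)) = 1 :=
      h1.2.1
    have hle2 : Module.finrank ℂ (LinearMap.ker (Lp p - 1)) ≤ 1 := by
      rw [← hG1]
      exact Submodule.finrank_mono hle
    have hvK : v ∈ LinearMap.ker (Lp p - 1) := by
      rw [LinearMap.mem_ker]
      simp only [LinearMap.sub_apply, Module.End.one_apply, hfixp, sub_self]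
    have hge : 0 < Module.finrank ℂ (LinearMap.ker (Lp p - 1)) := by
      rw [Module.finrank_pos_iff_exists_ne_zero]
      exact ⟨⟨v, hvK⟩, by simp [hv0]⟩
    omega
  · intro lam x hx0 heig hlam1
    by_contra hab
    push_neg at hab
    obtain ⟨h1x, habs⟩ := htrans lam x hx0 heig hab
    have := h1.2.2 lam x hx0 h1x hlam1
    linarith
end

section
/- For every k ∈ ℝ and every p with 0 < p ≤ 1 and q = 1 − p, the superoperator L_{k,k}(ρ) = p(B₁ρB₁* + B₂ρB₂*) + q·U_kρU_k* on 3×3 complex matrices, where U_k = e^{−ik}B₁ + e^{ik}B₂, satisfies the eigenvalue condition: 1 is an eigenvalue of L_{k,k} of algebraic multiplicity one and every other eigenvalue of L_{k,k} has absolute value strictly less than 1. -/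
open Matrix Complex

private lemma ker_pow_succ {M : Type*} [AddCommGroup M] [Module ℂ M] (f : Module.End ℂ M)
    (h2 : ∀ x, f (f x) = 0 → f x = 0) :
    ∀ m : ℕ, LinearMap.ker (f ^ (m + 1)) = LinearMap.ker f := by
  intro m
  induction m with
  | zero => rw [pow_one]
  | succ n ih =>
    apply le_antisymm
    · intro x hx
      rw [LinearMap.mem_ker] at hx ⊢
      rw [pow_succ, Module.End.mul_apply] at hx
      have hfx : f x ∈ LinearMap.ker (f ^ (n + 1)) := hx
      rw [ih, LinearMap.mem_ker] at hfx
      exact h2 x hfx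
    · intro x hx
      rw [LinearMap.mem_ker] at hx ⊢
      rw [pow_succ, Module.End.mul_apply, hx, map_zero]

set_option maxHeartbeats 4000000 in
/-- With `r = 1/√2`, `B₁ = r·[[1,0,1],[r,1,−r],[0,0,0]]`,
`B₂ = r·[[0,0,0],[0,0,0],[−r,1,r]]`, and `U_k = e^{−ik}B₁ + e^{ik}B₂`, for every `k ∈ ℝ` and
every `0 < p ≤ 1` with `q = 1 − p`, the superoperator
`L_{k,k}(ρ) = p(B₁ρB₁* + B₂ρB₂*) + q·U_kρU_k*` on `3×3` complex matrices satisfies the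
eigenvalue condition: `1` is an eigenvalue of algebraic multiplicity one and every other
eigenvalue has absolute value strictly less than `1`. -/
theorem stmt18 (r : ℂ) (hr : r = ((Real.sqrt 2 : ℝ) : ℂ)⁻¹)
    (B1 B2 : Matrix (Fin 3) (Fin 3) ℂ)
    (hB1 : B1 = r • !![1, 0, 1; r, 1, -r; 0, 0, 0])
    (hB2 : B2 = r • !![0, 0, 0; 0, 0, 0; -r, 1, r])
    (Uk : ℝ → Matrix (Fin 3) (Fin 3) ℂ)
    (hUk : ∀ k : ℝ, Uk k = Complex.exp (-Complex.I * k) • B1 +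
      Complex.exp (Complex.I * k) • B2)
    (k : ℝ) (p q : ℝ) (hp0 : 0 < p) (hp1 : p ≤ 1) (hq : q = 1 - p)
    (Lkk : Module.End ℂ (Matrix (Fin 3) (Fin 3) ℂ))
    (hLkk : ∀ ρ, Lkk ρ = (p : ℂ) • (B1 * ρ * B1ᴴ + B2 * ρ * B2ᴴ) +
      (q : ℂ) • (Uk k * ρ * (Uk k)ᴴ)) :
    (∃ ρ, ρ ≠ 0 ∧ Lkk ρ = ρ) ∧ algMult Lkk 1 = 1 ∧
      ∀ (lam : ℂ) (ρ : Matrix (Fin 3) (Fin 3) ℂ),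
        ρ ≠ 0 → Lkk ρ = lam • ρ → lam ≠ 1 → ‖lam‖ < 1 := by
  -- basic facts about r
  have hrc : (starRingEnd ℂ) r = r := by rw [hr]; simp
  have hr2 : r * r = 2⁻¹ := by
    rw [hr, ← mul_inv]; norm_cast
    rw [Real.mul_self_sqrt (by norm_num)]; norm_num
  have hrne : r ≠ 0 := by rw [hr]; simp [Real.sqrt_eq_zero']
  have hr2' : r ^ 2 = 2⁻¹ := by rw [pow_two, hr2]
  have hr4' : r ^ 4 = 4⁻¹ := by
    have : r ^ 4 = (r*r) * (r*r) := by ring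
    rw [this, hr2]; norm_num
  have hr3' : r ^ 3 = 2⁻¹ * r := by
    have : r ^ 3 = (r*r) * r := by ring
    rw [this, hr2]
  -- basic facts about the phase e
  set e : ℂ := Complex.exp (Complex.I * k) with hedef
  have hene : e ≠ 0 := Complex.exp_ne_zero _
  have he : Complex.exp (-Complex.I * k) = e⁻¹ := by
    rw [hedef, ← Complex.exp_neg]; ring_nf
  have he' : Complex.exp (-(Complex.I * k)) = e⁻¹ := by rw [← he]; ring_nf
  have hec : (starRingEnd ℂ) e = e⁻¹ := by
    rw [hedef, ← Complex.exp_conj, ← Complex.exp_neg]; congr 1; simp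
  have hnse : Complex.normSq e = 1 := by
    have h1 : (Complex.normSq e : ℂ) = 1 := by
      rw [← Complex.mul_conj, hec, mul_inv_cancel₀ hene]
    exact_mod_cast h1
  have hqC : (q : ℂ) = 1 - p := by rw [hq]; push_cast; ring
  have hq0 : 0 ≤ q := by rw [hq]; linarith
  have hq1 : q < 1 := by rw [hq]; linarith
  have hq2 : q ^ 2 < 1 := by nlinarith
  -- the unitary U and the Hadamard multiplier Cm
  set U : Matrix (Fin 3) (Fin 3) ℂ := !![r, 0, r; r*r, r, -(r*r); -(r*r), r, r*r] with hU
  set Cm : Matrix (Fin 3) (Fin 3) ℂ :=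
    !![1, 1, q*(e*e)⁻¹; 1, 1, q*(e*e)⁻¹; q*(e*e), q*(e*e), 1] with hCm
  have hC : ∀ (ρ : Matrix (Fin 3) (Fin 3) ℂ) (i j : Fin 3),
      Lkk ρ i j = Cm i j * (U * ρ * Uᴴ) i j := by
    intro ρ i j
    rw [hLkk]
    fin_cases i <;> fin_cases j <;>
      · simp [hB1, hB2, hUk k, hU, hCm, Matrix.mul_apply, Matrix.conjTranspose_apply,
          Fin.sum_univ_three, Complex.star_def, hrc, ← hedef, he, he', hec, hqC, -Matrix.cons_mul]
        try field_simp
        try ring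
  -- unitarity facts
  have hU1 : Uᴴ * U = 1 := by
    ext i j
    fin_cases i <;> fin_cases j <;>
      · simp [hU, Matrix.mul_apply, Matrix.conjTranspose_apply, Fin.sum_univ_three,
          Matrix.one_apply, Complex.star_def, hrc, -Matrix.cons_mul]
        try field_simp
        try ring_nf
        try simp [hr2', hr4', hr3', hr2, hrc, Matrix.vecHead, Matrix.vecTail]
        try norm_num
        try ring_nf
        try simp [hr2', hr4', hr3', hr2, hrc]
  have hB1B : B1ᴴ * B1 + B2ᴴ * B2 = 1 := by
    ext i j
    fin_cases i <;> fin_cases j <;>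
      · simp [hB1, hB2, Matrix.mul_apply, Matrix.conjTranspose_apply, Fin.sum_univ_three,
          Matrix.one_apply, Complex.star_def, hrc, -Matrix.cons_mul]
        try field_simp
        try ring_nf
        try simp [hr2', hr4', hr3', hr2, hrc, Matrix.vecHead, Matrix.vecTail]
        try norm_num
        try ring_nf
        try simp [hr2', hr4', hr3', hr2, hrc]
  have hUkU : (Uk k)ᴴ * Uk k = 1 := by
    ext i j
    fin_cases i <;> fin_cases j <;>
      · simp [hB1, hB2, hUk k, Matrix.mul_apply, Matrix.conjTranspose_apply, Fin.sum_univ_three,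
          Matrix.one_apply, Complex.star_def, hrc, ← hedef, he, he', hec, -Matrix.cons_mul]
        try field_simp
        try ring_nf
        try simp [hr2', hr4', hr3', hr2, hrc, Matrix.vecHead, Matrix.vecTail]
        try norm_num
        try ring_nf
        try simp [hr2', hr4', hr3', hr2, hrc]
  have hBBH : B1 * B1ᴴ + B2 * B2ᴴ = 1 := by
    ext i j
    fin_cases i <;> fin_cases j <;>
      · simp [hB1, hB2, Matrix.mul_apply, Matrix.conjTranspose_apply, Fin.sum_univ_three,
          Matrix.one_apply, Complex.star_def, hrc, -Matrix.cons_mul]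
        try field_simp
        try ring_nf
        try simp [hr2', hr4', hr3', hr2, hrc, Matrix.vecHead, Matrix.vecTail]
        try norm_num
        try ring_nf
        try simp [hr2', hr4', hr3', hr2, hrc]
  have hUkH : Uk k * (Uk k)ᴴ = 1 := by
    ext i j
    fin_cases i <;> fin_cases j <;>
      · simp [hB1, hB2, hUk k, Matrix.mul_apply, Matrix.conjTranspose_apply, Fin.sum_univ_three,
          Matrix.one_apply, Complex.star_def, hrc, ← hedef, he, he', hec, -Matrix.cons_mul]
        try field_simp
        try ring_nf
        try simp [hr2', hr4', hr3', hr2, hrc, Matrix.vecHead, Matrix.vecTail]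
        try norm_num
        try ring_nf
        try simp [hr2', hr4', hr3', hr2, hrc]
  -- L fixes the identity
  have hpq1 : (p : ℂ) + q = 1 := by rw [hqC]; ring
  have hfix1 : Lkk 1 = 1 := by
    rw [hLkk]
    rw [Matrix.mul_one, Matrix.mul_one, Matrix.mul_one, hBBH, hUkH]
    rw [← add_smul, hpq1, one_smul]
  -- L preserves trace
  have htrace : ∀ ρ, Matrix.trace (Lkk ρ) = Matrix.trace ρ := by
    intro ρ
    have t1 : ∀ A X : Matrix (Fin 3) (Fin 3) ℂ,
        Matrix.trace (A * X * Aᴴ) = Matrix.trace (Aᴴ * A * X) := fun A X =>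
      Matrix.trace_mul_cycle A X Aᴴ
    rw [hLkk]
    simp only [Matrix.trace_add, Matrix.trace_smul]
    rw [t1 B1, t1 B2, t1 (Uk k), hUkU, Matrix.one_mul]
    have h3 : B1ᴴ * B1 * ρ + B2ᴴ * B2 * ρ = ρ := by rw [← add_mul, hB1B, Matrix.one_mul]
    rw [← Matrix.trace_add, h3, ← add_smul, hpq1, one_smul]
  -- Frobenius norm is preserved by conjugation by U
  have htrN : ∀ X : Matrix (Fin 3) (Fin 3) ℂ,
      Matrix.trace (X * Xᴴ) = ((∑ i, ∑ j, Complex.normSq (X i j) : ℝ) : ℂ) := by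
    intro X
    rw [Matrix.trace]
    push_cast
    apply Finset.sum_congr rfl
    intro i _
    rw [Matrix.diag_apply, Matrix.mul_apply]
    apply Finset.sum_congr rfl
    intro j _
    rw [Matrix.conjTranspose_apply, Complex.star_def, Complex.mul_conj]
  have hNU : ∀ ρ : Matrix (Fin 3) (Fin 3) ℂ,
      (∑ i, ∑ j, Complex.normSq ((U * ρ * Uᴴ) i j)) = ∑ i, ∑ j, Complex.normSq (ρ i j) := by
    intro ρ
    have hmm : (U * ρ * Uᴴ) * (U * ρ * Uᴴ)ᴴ = U * (ρ * (ρᴴ * Uᴴ)) := by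
      simp only [Matrix.conjTranspose_mul, Matrix.conjTranspose_conjTranspose,
        Matrix.mul_assoc]
      congr 1
      congr 1
      rw [← Matrix.mul_assoc, hU1, Matrix.one_mul]
    have h1 : Matrix.trace ((U * ρ * Uᴴ) * (U * ρ * Uᴴ)ᴴ) = Matrix.trace (ρ * ρᴴ) := by
      rw [hmm, ← Matrix.mul_assoc, ← Matrix.mul_assoc, Matrix.trace_mul_cycle]
      rw [show Uᴴ * (U * ρ) = Uᴴ * U * ρ from (Matrix.mul_assoc _ _ _).symm] <;>
        try rw [hU1, Matrix.one_mul]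
      try rw [hU1, Matrix.one_mul]
    rw [htrN, htrN] at h1
    exact_mod_cast h1
  -- positivity of the Frobenius norm
  have hNpos : ∀ ρ : Matrix (Fin 3) (Fin 3) ℂ, ρ ≠ 0 →
      0 < ∑ i, ∑ j, Complex.normSq (ρ i j) := by
    intro ρ hρ
    have : ∃ i j, ρ i j ≠ 0 := by
      by_contra h
      push_neg at h
      exact hρ (by ext i j; simpa using h i j)
    obtain ⟨i0, j0, h0⟩ := this
    have h1 : 0 < ∑ j, Complex.normSq (ρ i0 j) :=
      Finset.sum_pos' (fun _ _ => Complex.normSq_nonneg _)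
        ⟨j0, Finset.mem_univ _, Complex.normSq_pos.mpr h0⟩
    exact Finset.sum_pos' (fun _ _ => Finset.sum_nonneg fun _ _ => Complex.normSq_nonneg _)
      ⟨i0, Finset.mem_univ _, h1⟩
  -- the main spectral analysis
  have main : ∀ (lam : ℂ) (ρ : Matrix (Fin 3) (Fin 3) ℂ), ρ ≠ 0 → Lkk ρ = lam • ρ →
      Complex.normSq lam ≤ 1 ∧
        (Complex.normSq lam = 1 → lam = 1 ∧ ∃ a : ℂ, ρ = a • (1 : Matrix (Fin 3) (Fin 3) ℂ)) := by
    intro lam ρ hρne hL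
    set σ : Matrix (Fin 3) (Fin 3) ℂ := U * ρ * Uᴴ with hσdef
    have hent : ∀ i j, lam * ρ i j = Cm i j * σ i j := by
      intro i j
      rw [← hC ρ i j, hL, Matrix.smul_apply, smul_eq_mul]
    have hns : ∀ i j, Complex.normSq lam * Complex.normSq (ρ i j) =
        Complex.normSq (Cm i j) * Complex.normSq (σ i j) := by
      intro i j
      rw [← Complex.normSq_mul, ← Complex.normSq_mul, hent]
    have hq2a : Complex.normSq ((q : ℂ) * (e * e)) = q ^ 2 := by
      simp [Complex.normSq_mul, hnse, Complex.normSq_ofReal]; ring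
    have hq2b : Complex.normSq ((q : ℂ) * (e * e)⁻¹) = q ^ 2 := by
      simp [Complex.normSq_mul, Complex.normSq_inv, hnse, Complex.normSq_ofReal]; ring
    have h00 : Complex.normSq lam * Complex.normSq (ρ 0 0) = Complex.normSq (σ 0 0) := by
      have h := hns 0 0; rwa [show Cm 0 0 = 1 by simp [hCm], Complex.normSq_one, one_mul] at h
    have h01 : Complex.normSq lam * Complex.normSq (ρ 0 1) = Complex.normSq (σ 0 1) := by
      have h := hns 0 1; rwa [show Cm 0 1 = 1 by simp [hCm], Complex.normSq_one, one_mul] at h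
    have h10 : Complex.normSq lam * Complex.normSq (ρ 1 0) = Complex.normSq (σ 1 0) := by
      have h := hns 1 0; rwa [show Cm 1 0 = 1 by simp [hCm], Complex.normSq_one, one_mul] at h
    have h11 : Complex.normSq lam * Complex.normSq (ρ 1 1) = Complex.normSq (σ 1 1) := by
      have h := hns 1 1; rwa [show Cm 1 1 = 1 by simp [hCm], Complex.normSq_one, one_mul] at h
    have h22 : Complex.normSq lam * Complex.normSq (ρ 2 2) = Complex.normSq (σ 2 2) := by
      have h := hns 2 2; rwa [show Cm 2 2 = 1 by simp [hCm], Complex.normSq_one, one_mul] at h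
    have h02 : Complex.normSq lam * Complex.normSq (ρ 0 2) = q ^ 2 * Complex.normSq (σ 0 2) := by
      have h := hns 0 2; rwa [show Cm 0 2 = (q : ℂ) * (e*e)⁻¹ by simp [hCm], hq2b] at h
    have h12 : Complex.normSq lam * Complex.normSq (ρ 1 2) = q ^ 2 * Complex.normSq (σ 1 2) := by
      have h := hns 1 2; rwa [show Cm 1 2 = (q : ℂ) * (e*e)⁻¹ by simp [hCm], hq2b] at h
    have h20 : Complex.normSq lam * Complex.normSq (ρ 2 0) = q ^ 2 * Complex.normSq (σ 2 0) := by
      have h := hns 2 0; rwa [show Cm 2 0 = (q : ℂ) * (e*e) by simp [hCm], hq2a] at h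
    have h21 : Complex.normSq lam * Complex.normSq (ρ 2 1) = q ^ 2 * Complex.normSq (σ 2 1) := by
      have h := hns 2 1; rwa [show Cm 2 1 = (q : ℂ) * (e*e) by simp [hCm], hq2a] at h
    have hsum : Complex.normSq (σ 0 0) + Complex.normSq (σ 0 1) + Complex.normSq (σ 0 2)
        + Complex.normSq (σ 1 0) + Complex.normSq (σ 1 1) + Complex.normSq (σ 1 2)
        + Complex.normSq (σ 2 0) + Complex.normSq (σ 2 1) + Complex.normSq (σ 2 2)
        = Complex.normSq (ρ 0 0) + Complex.normSq (ρ 0 1) + Complex.normSq (ρ 0 2)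
        + Complex.normSq (ρ 1 0) + Complex.normSq (ρ 1 1) + Complex.normSq (ρ 1 2)
        + Complex.normSq (ρ 2 0) + Complex.normSq (ρ 2 1) + Complex.normSq (ρ 2 2) := by
      have h := hNU ρ
      rw [← hσdef] at h
      simp only [Fin.sum_univ_three] at h
      linarith [h]
    have hNρ : 0 < Complex.normSq (ρ 0 0) + Complex.normSq (ρ 0 1) + Complex.normSq (ρ 0 2)
        + Complex.normSq (ρ 1 0) + Complex.normSq (ρ 1 1) + Complex.normSq (ρ 1 2)
        + Complex.normSq (ρ 2 0) + Complex.normSq (ρ 2 1) + Complex.normSq (ρ 2 2) := by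
      have h := hNpos ρ hρne
      simp only [Fin.sum_univ_three] at h
      linarith [h]
    have hkey : Complex.normSq lam *
        (Complex.normSq (ρ 0 0) + Complex.normSq (ρ 0 1) + Complex.normSq (ρ 0 2)
        + Complex.normSq (ρ 1 0) + Complex.normSq (ρ 1 1) + Complex.normSq (ρ 1 2)
        + Complex.normSq (ρ 2 0) + Complex.normSq (ρ 2 1) + Complex.normSq (ρ 2 2))
        = (Complex.normSq (σ 0 0) + Complex.normSq (σ 0 1) + Complex.normSq (σ 1 0)
          + Complex.normSq (σ 1 1) + Complex.normSq (σ 2 2))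
        + q ^ 2 * (Complex.normSq (σ 0 2) + Complex.normSq (σ 1 2)
          + Complex.normSq (σ 2 0) + Complex.normSq (σ 2 1)) := by
      linear_combination h00 + h01 + h02 + h10 + h11 + h12 + h20 + h21 + h22
    have hcross_nonneg : (0:ℝ) ≤ Complex.normSq (σ 0 2) + Complex.normSq (σ 1 2)
        + Complex.normSq (σ 2 0) + Complex.normSq (σ 2 1) := by
      have n1 := Complex.normSq_nonneg (σ 0 2)
      have n2 := Complex.normSq_nonneg (σ 1 2)
      have n3 := Complex.normSq_nonneg (σ 2 0)
      have n4 := Complex.normSq_nonneg (σ 2 1)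
      linarith
    constructor
    · nlinarith [hkey, hsum, hcross_nonneg, hq2, hNρ]
    intro hns1
    rw [hns1, one_mul] at hkey
    have hzero : (1 - q ^ 2) * (Complex.normSq (σ 0 2) + Complex.normSq (σ 1 2)
        + Complex.normSq (σ 2 0) + Complex.normSq (σ 2 1)) = 0 := by
      linear_combination hsum + hkey
    have c1 : σ 0 2 = 0 := by
      apply Complex.normSq_eq_zero.mp
      nlinarith [hzero, hq2, Complex.normSq_nonneg (σ 0 2), Complex.normSq_nonneg (σ 1 2),
        Complex.normSq_nonneg (σ 2 0), Complex.normSq_nonneg (σ 2 1)]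
    have c2 : σ 1 2 = 0 := by
      apply Complex.normSq_eq_zero.mp
      nlinarith [hzero, hq2, Complex.normSq_nonneg (σ 0 2), Complex.normSq_nonneg (σ 1 2),
        Complex.normSq_nonneg (σ 2 0), Complex.normSq_nonneg (σ 2 1)]
    have c3 : σ 2 0 = 0 := by
      apply Complex.normSq_eq_zero.mp
      nlinarith [hzero, hq2, Complex.normSq_nonneg (σ 0 2), Complex.normSq_nonneg (σ 1 2),
        Complex.normSq_nonneg (σ 2 0), Complex.normSq_nonneg (σ 2 1)]
    have c4 : σ 2 1 = 0 := by
      apply Complex.normSq_eq_zero.mp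
      nlinarith [hzero, hq2, Complex.normSq_nonneg (σ 0 2), Complex.normSq_nonneg (σ 1 2),
        Complex.normSq_nonneg (σ 2 0), Complex.normSq_nonneg (σ 2 1)]
    have hlamne : lam ≠ 0 := by
      intro h; rw [h] at hns1; simp at hns1
    have hmat : ∀ i j, lam * ρ i j = σ i j := by
      intro i j
      rw [hent i j]
      fin_cases i <;> fin_cases j <;> simp [hCm, c1, c2, c3, c4]
    have p02 : ρ 0 2 = 0 := by
      have h := hmat 0 2; rw [c1] at h
      exact (mul_eq_zero.mp h).resolve_left hlamne
    have p12 : ρ 1 2 = 0 := by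
      have h := hmat 1 2; rw [c2] at h
      exact (mul_eq_zero.mp h).resolve_left hlamne
    have p20 : ρ 2 0 = 0 := by
      have h := hmat 2 0; rw [c3] at h
      exact (mul_eq_zero.mp h).resolve_left hlamne
    have p21 : ρ 2 1 = 0 := by
      have h := hmat 2 1; rw [c4] at h
      exact (mul_eq_zero.mp h).resolve_left hlamne
    have hσeq : lam • ρ = σ := by
      ext i j
      rw [Matrix.smul_apply, smul_eq_mul]
      exact hmat i j
    have hcomm : lam • (ρ * U) = U * ρ := by
      calc lam • (ρ * U) = (lam • ρ) * U := by rw [Matrix.smul_mul]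
        _ = σ * U := by rw [hσeq]
        _ = U * ρ := by
            rw [hσdef, Matrix.mul_assoc (U * ρ), hU1, Matrix.mul_one]
    have Eq : ∀ i j : Fin 3,
        lam * (ρ i 0 * U 0 j + ρ i 1 * U 1 j + ρ i 2 * U 2 j)
          = U i 0 * ρ 0 j + U i 1 * ρ 1 j + U i 2 * ρ 2 j := by
      intro i j
      have h := congrFun (congrFun hcomm i) j
      simp only [Matrix.smul_apply, Matrix.mul_apply, Fin.sum_univ_three, smul_eq_mul] at h
      exact h
    have u00 : U 0 0 = r := by simp [hU, Matrix.vecHead, Matrix.vecTail]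
    have u01 : U 0 1 = 0 := by simp [hU, Matrix.vecHead, Matrix.vecTail]
    have u02 : U 0 2 = r := by simp [hU, Matrix.vecHead, Matrix.vecTail]
    have u10 : U 1 0 = r * r := by simp [hU, Matrix.vecHead, Matrix.vecTail]
    have u11 : U 1 1 = r := by simp [hU, Matrix.vecHead, Matrix.vecTail]
    have u12 : U 1 2 = -(r * r) := by simp [hU, Matrix.vecHead, Matrix.vecTail]
    have u20 : U 2 0 = -(r * r) := by simp [hU, Matrix.vecHead, Matrix.vecTail]
    have u21 : U 2 1 = r := by simp [hU, Matrix.vecHead, Matrix.vecTail]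
    have u22 : U 2 2 = r * r := by simp [hU, Matrix.vecHead, Matrix.vecTail]
    have A1 : lam * ρ 0 1 = ρ 0 1 := by
      have h := Eq 0 1
      rw [u01, u11, u21, u00, u02, p02, p21] at h
      have h2 : r * (lam * ρ 0 1 - ρ 0 1) = 0 := by linear_combination h
      exact sub_eq_zero.mp ((mul_eq_zero.mp h2).resolve_left hrne)
    have A2 : lam * ρ 1 1 = r * ρ 0 1 + ρ 1 1 := by
      have h := Eq 1 1
      rw [u01, u11, u21, u10, u12, p12, p21] at h
      have h2 : r * (lam * ρ 1 1 - (r * ρ 0 1 + ρ 1 1)) = 0 := by linear_combination h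
      exact sub_eq_zero.mp ((mul_eq_zero.mp h2).resolve_left hrne)
    have A3 : lam * (ρ 0 0 + r * ρ 0 1) = ρ 0 0 := by
      have h := Eq 0 0
      rw [u00, u10, u20, u01, u02, p02, p20] at h
      have h2 : r * (lam * (ρ 0 0 + r * ρ 0 1) - ρ 0 0) = 0 := by linear_combination h
      exact sub_eq_zero.mp ((mul_eq_zero.mp h2).resolve_left hrne)
    have A4 : lam * (ρ 1 0 + r * ρ 1 1) = r * ρ 0 0 + ρ 1 0 := by
      have h := Eq 1 0
      rw [u00, u10, u20, u11, u12, p12, p20] at h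
      have h2 : r * (lam * (ρ 1 0 + r * ρ 1 1) - (r * ρ 0 0 + ρ 1 0)) = 0 := by
        linear_combination h
      exact sub_eq_zero.mp ((mul_eq_zero.mp h2).resolve_left hrne)
    have A5 : lam * (ρ 0 0 - r * ρ 0 1) = ρ 2 2 := by
      have h := Eq 0 2
      rw [u02, u12, u22, u00, u01, p02, p12] at h
      have h2 : r * (lam * (ρ 0 0 - r * ρ 0 1) - ρ 2 2) = 0 := by linear_combination h
      exact sub_eq_zero.mp ((mul_eq_zero.mp h2).resolve_left hrne)
    have A6 : lam * ρ 2 2 = -(r * ρ 0 1) + ρ 1 1 := by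
      have h := Eq 2 1
      rw [u01, u11, u21, u20, u22, p20, p21] at h
      have h2 : r * (lam * ρ 2 2 - (-(r * ρ 0 1) + ρ 1 1)) = 0 := by linear_combination h
      exact sub_eq_zero.mp ((mul_eq_zero.mp h2).resolve_left hrne)
    have A7 : lam * (ρ 1 0 - r * ρ 1 1) = -(r * ρ 2 2) := by
      have h := Eq 1 2
      rw [u02, u12, u22, u10, u11, p02, p12] at h
      have h2 : r * (lam * (ρ 1 0 - r * ρ 1 1) - (-(r * ρ 2 2))) = 0 := by
        linear_combination h
      exact sub_eq_zero.mp ((mul_eq_zero.mp h2).resolve_left hrne)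
    have A8 : lam * ρ 2 2 = ρ 2 2 := by
      have h := Eq 2 2
      rw [u02, u12, u22, u20, u21, p20, p21, p02, p12] at h
      have h2 : (2:ℂ)⁻¹ * (lam * ρ 2 2 - ρ 2 2) = 0 := by
        linear_combination h - (lam * ρ 2 2 - ρ 2 2) * hr2
      have h3 := (mul_eq_zero.mp h2).resolve_left (by norm_num)
      exact sub_eq_zero.mp h3
    by_cases hlam : lam = 1
    · refine ⟨hlam, ρ 0 0, ?_⟩
      rw [hlam, one_mul] at A2 A5 A6 A7
      have hb : ρ 0 1 = 0 := by
        have h0 : r * ρ 0 1 = 0 := by linear_combination -A2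
        exact (mul_eq_zero.mp h0).resolve_left hrne
      have hE : ρ 2 2 = ρ 0 0 := by linear_combination -A5 - r * hb
      have hd : ρ 1 1 = ρ 0 0 := by linear_combination -A6 + hE + r * hb
      have hc : ρ 1 0 = 0 := by linear_combination A7 + r * hd - r * hE
      ext i j
      fin_cases i <;> fin_cases j <;>
        simp [Matrix.smul_apply, Matrix.one_apply, hb, hE, hd, hc, p02, p12, p20, p21]
    · exfalso
      have hlam1 : lam - 1 ≠ 0 := sub_ne_zero.mpr hlam
      have he0 : ρ 2 2 = 0 := by
        have h2 : (lam - 1) * ρ 2 2 = 0 := by linear_combination A8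
        exact (mul_eq_zero.mp h2).resolve_left hlam1
      have hb0 : ρ 0 1 = 0 := by
        have h2 : (lam - 1) * ρ 0 1 = 0 := by linear_combination A1
        exact (mul_eq_zero.mp h2).resolve_left hlam1
      have hd0 : ρ 1 1 = 0 := by
        have h2 : (lam - 1) * ρ 1 1 = 0 := by linear_combination A2 + r * hb0
        exact (mul_eq_zero.mp h2).resolve_left hlam1
      have ha0 : ρ 0 0 = 0 := by
        have h2 : (lam - 1) * ρ 0 0 = 0 := by linear_combination A3 - lam * r * hb0
        exact (mul_eq_zero.mp h2).resolve_left hlam1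
      have hc0 : ρ 1 0 = 0 := by
        have h2 : (lam - 1) * ρ 1 0 = 0 := by linear_combination A4 - lam * r * hd0 + r * ha0
        exact (mul_eq_zero.mp h2).resolve_left hlam1
      apply hρne
      ext i j
      fin_cases i <;> fin_cases j <;>
        simp [he0, hb0, hd0, ha0, hc0, p02, p12, p20, p21]
  refine ⟨⟨1, ?_, hfix1⟩, ?_, ?_⟩
  · intro h
    have := congrFun (congrFun h 0) 0
    simp [Matrix.one_apply] at this
  · -- algebraic multiplicity
    have hone_ne : (1 : Matrix (Fin 3) (Fin 3) ℂ) ≠ 0 := by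
      intro h
      have := congrFun (congrFun h 0) 0
      simp [Matrix.one_apply] at this
    set f : Module.End ℂ (Matrix (Fin 3) (Fin 3) ℂ) := Lkk - 1 with hf
    have hfapp : ∀ x, f x = Lkk x - x := by
      intro x; simp [hf, LinearMap.sub_apply]
    have hkerf : LinearMap.ker f = Submodule.span ℂ {(1 : Matrix (Fin 3) (Fin 3) ℂ)} := by
      apply le_antisymm
      · intro x hx
        rw [LinearMap.mem_ker, hfapp, sub_eq_zero] at hx
        by_cases hx0 : x = 0
        · rw [hx0]; exact Submodule.zero_mem _
        · obtain ⟨-, h2⟩ := main 1 x hx0 (by rw [hx, one_smul])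
          obtain ⟨a, ha⟩ := (h2 (by simp)).2
          rw [Submodule.mem_span_singleton]
          exact ⟨a, ha.symm⟩
      · rw [Submodule.span_singleton_le_iff_mem, LinearMap.mem_ker, hfapp, hfix1, sub_self]
    have h2 : ∀ x, f (f x) = 0 → f x = 0 := by
      intro x hxx
      have hfx : f x ∈ LinearMap.ker f := LinearMap.mem_ker.mpr hxx
      rw [hkerf, Submodule.mem_span_singleton] at hfx
      obtain ⟨c, hc⟩ := hfx
      have htr0 : Matrix.trace (f x) = 0 := by
        rw [hfapp, Matrix.trace_sub, htrace, sub_self]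
      rw [← hc] at htr0 ⊢
      rw [Matrix.trace_smul, Matrix.trace_one] at htr0
      have hc0 : c = 0 := by
        have h3 : c * 3 = 0 := by simpa using htr0
        rcases mul_eq_zero.mp h3 with h | h
        · exact h
        · norm_num at h
      rw [hc0, zero_smul]
    unfold algMult
    have hμ : Lkk - (1:ℂ) • (1 : Module.End ℂ (Matrix (Fin 3) (Fin 3) ℂ)) = f := by
      rw [one_smul, hf]
    rw [hμ]
    have hsup : (⨆ m : ℕ, LinearMap.ker (f ^ m)) = LinearMap.ker f := by
      apply le_antisymm
      · apply iSup_le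
        intro m
        cases m with
        | zero =>
          intro x hx
          rw [LinearMap.mem_ker] at hx
          rw [pow_zero] at hx
          have hx0 : x = 0 := hx
          rw [hx0]
          exact Submodule.zero_mem _
        | succ n => rw [ker_pow_succ f h2 n]
      · exact le_iSup_of_le 1 (by rw [pow_one])
    rw [hsup, hkerf, finrank_span_singleton hone_ne]
  · intro lam ρ hρne hL hlam1
    obtain ⟨hle, heq⟩ := main lam ρ hρne hL
    have hlt : Complex.normSq lam < 1 := by
      rcases lt_or_eq_of_le hle with h | h
      · exact h
      · exact absurd (heq h).1 hlam1
    have habs : ‖lam‖ ^ 2 < 1 := by rw [Complex.sq_norm]; exact hlt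
    nlinarith [norm_nonneg lam]
end
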